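/- arXiv:2402.07194 — 2 statements merged into one kernel-verified Lean document; each statement's English description precedes it below -/
import Mathlib

section
/- Let G and H be simple graphs, neither of which is a complete graph. Then for any two vertices (g,h) and (g',h') of the modular product G⋄H, either d_{G⋄H}((g,h),(g',h')) ≤ 3, or there is no path between (g,h) and (g',h') in G⋄H and both G and H are a disjoint union of two cliques. -/
open SimpleGraph

/-- The closed neighborhood `N[v]` of a vertex. -/
def closedNbr {α : Type*} (G : SimpleGraph α) (v : α) : Set α :=
  insert v (G.neighborSet v)

/-- The modular product `G ⋄ H`. -/
def modularProduct {α β : Type*} (G : SimpleGraph α) (H : SimpleGraph β) :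
    SimpleGraph (α × β) :=
  SimpleGraph.fromRel (fun x y =>
    (x.1 = y.1 ∧ H.Adj x.2 y.2) ∨
    (G.Adj x.1 y.1 ∧ x.2 = y.2) ∨
    (G.Adj x.1 y.1 ∧ H.Adj x.2 y.2) ∨
    (x.1 ≠ y.1 ∧ x.2 ≠ y.2 ∧ ¬ G.Adj x.1 y.1 ∧ ¬ H.Adj x.2 y.2))

/-- `{g, g'}` is a `γ_G`-pair: the closed neighborhoods are disjoint and cover `V(G)`. -/
def gammaPair {α : Type*} (G : SimpleGraph α) (g g' : α) : Prop :=
  closedNbr G g ∩ closedNbr G g' = ∅ ∧ closedNbr G g ∪ closedNbr G g' = Set.univ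

/-- A universal vertex. -/
def IsUniversal {α : Type*} (G : SimpleGraph α) (v : α) : Prop :=
  closedNbr G v = Set.univ

/-- A complete graph: every two distinct vertices are adjacent. -/
def IsCompleteGraph {α : Type*} (G : SimpleGraph α) : Prop :=
  ∀ u v : α, u ≠ v → G.Adj u v

/-- `G` is a disjoint union of two cliques. -/
def TwoCliques {α : Type*} (G : SimpleGraph α) : Prop :=
  ∃ A B : Set α, A.Nonempty ∧ B.Nonempty ∧ A ∪ B = Set.univ ∧ A ∩ B = ∅ ∧
    (∀ u ∈ A, ∀ v ∈ A, u ≠ v → G.Adj u v) ∧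
    (∀ u ∈ B, ∀ v ∈ B, u ≠ v → G.Adj u v) ∧
    (∀ u ∈ A, ∀ v ∈ B, ¬ G.Adj u v)

/-- `u` and `v` are mutually maximally distant in `X`. -/
def MMD {α : Type*} (X : SimpleGraph α) (u v : α) : Prop :=
  (∀ w, X.Adj u w → X.edist w v ≤ X.edist u v) ∧
  (∀ w, X.Adj v w → X.edist w u ≤ X.edist u v)

/-- A strong resolving set of `X`. -/
def IsStrongResolvingSet {α : Type*} (X : SimpleGraph α) (S : Set α) : Prop :=
  ∀ u v : α, u ≠ v → ∃ w ∈ S,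
    X.dist u w = X.dist u v + X.dist v w ∨ X.dist v w = X.dist v u + X.dist u w

/-- The strong metric dimension of `X`. -/
noncomputable def sdim {α : Type*} (X : SimpleGraph α) : ℕ :=
  sInf {n | ∃ S : Set α, S.ncard = n ∧ IsStrongResolvingSet X S}

/-- The star `K_{1,n}`: the center is `none`, the leaves are `some i`. -/
def starGraph (n : ℕ) : SimpleGraph (Option (Fin n)) :=
  SimpleGraph.fromRel (fun u v => u = none ∧ v ≠ none)

/-- The vertex cover number `β(X)`. -/
noncomputable def vertexCoverNumber {γ : Type*} (X : SimpleGraph γ) : ℕ :=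
  sInf {n | ∃ C : Set γ, C.ncard = n ∧ ∀ u v, X.Adj u v → u ∈ C ∨ v ∈ C}


section Aux

open SimpleGraph

variable {α β : Type*} {G : SimpleGraph α} {H : SimpleGraph β}

private lemma mp_adj {x y : α × β} :
    (modularProduct G H).Adj x y ↔ x ≠ y ∧
      ((x.1 = y.1 ∧ H.Adj x.2 y.2) ∨ (G.Adj x.1 y.1 ∧ x.2 = y.2) ∨
       (G.Adj x.1 y.1 ∧ H.Adj x.2 y.2) ∨
       (x.1 ≠ y.1 ∧ x.2 ≠ y.2 ∧ ¬ G.Adj x.1 y.1 ∧ ¬ H.Adj x.2 y.2)) := by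
  constructor
  · rintro ⟨hne, hr | hr⟩
    · exact ⟨hne, hr⟩
    · refine ⟨hne, ?_⟩
      rcases hr with ⟨e, a⟩ | ⟨a, e⟩ | ⟨a, b⟩ | ⟨n1, n2, na, nb⟩
      · exact Or.inl ⟨e.symm, a.symm⟩
      · exact Or.inr (Or.inl ⟨a.symm, e.symm⟩)
      · exact Or.inr (Or.inr (Or.inl ⟨a.symm, b.symm⟩))
      · exact Or.inr (Or.inr (Or.inr ⟨n1.symm, n2.symm, fun h2 => na h2.symm,
          fun h2 => nb h2.symm⟩))
  · rintro ⟨hne, hr⟩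
    exact ⟨hne, Or.inl hr⟩

private lemma mpr1 {g : α} {a b : β} (h2 : H.Adj a b) :
    (modularProduct G H).Adj (g, a) (g, b) :=
  mp_adj.mpr ⟨fun e => h2.ne (congrArg Prod.snd e), Or.inl ⟨rfl, h2⟩⟩

private lemma mpr2 {a b : α} {s : β} (h1 : G.Adj a b) :
    (modularProduct G H).Adj (a, s) (b, s) :=
  mp_adj.mpr ⟨fun e => h1.ne (congrArg Prod.fst e), Or.inr (Or.inl ⟨h1, rfl⟩)⟩

private lemma mpr3 {a b : α} {s t : β} (h1 : G.Adj a b) (h2 : H.Adj s t) :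
    (modularProduct G H).Adj (a, s) (b, t) :=
  mp_adj.mpr ⟨fun e => h1.ne (congrArg Prod.fst e), Or.inr (Or.inr (Or.inl ⟨h1, h2⟩))⟩

private lemma mpr4 {a b : α} {s t : β} (n1 : a ≠ b) (n2 : s ≠ t)
    (na : ¬ G.Adj a b) (nb : ¬ H.Adj s t) :
    (modularProduct G H).Adj (a, s) (b, t) :=
  mp_adj.mpr ⟨fun e => n1 (congrArg Prod.fst e),
    Or.inr (Or.inr (Or.inr ⟨n1, n2, na, nb⟩))⟩

private lemma wlen1 {γ : Type*} {X : SimpleGraph γ} {x y : γ} (h1 : X.Adj x y) :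
    ∃ w : X.Walk x y, w.length ≤ 3 :=
  ⟨Walk.cons h1 Walk.nil, by simp⟩

private lemma wlen2 {γ : Type*} {X : SimpleGraph γ} {x a y : γ}
    (h1 : X.Adj x a) (h2 : X.Adj a y) : ∃ w : X.Walk x y, w.length ≤ 3 :=
  ⟨Walk.cons h1 (Walk.cons h2 Walk.nil), by simp⟩

private lemma wlen3 {γ : Type*} {X : SimpleGraph γ} {x a b y : γ}
    (h1 : X.Adj x a) (h2 : X.Adj a b) (h3 : X.Adj b y) : ∃ w : X.Walk x y, w.length ≤ 3 :=
  ⟨Walk.cons h1 (Walk.cons h2 (Walk.cons h3 Walk.nil)), by simp⟩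

private lemma edist_le_three_of_walk {γ : Type*} {X : SimpleGraph γ} {x y : γ}
    (hw : ∃ w : X.Walk x y, w.length ≤ 3) : X.edist x y ≤ 3 := by
  obtain ⟨w, hw⟩ := hw
  refine le_trans (SimpleGraph.edist_le w) ?_
  exact_mod_cast hw

private lemma walk_pres {γ : Type*} {X : SimpleGraph γ} {P : γ → Prop}
    (hst : ∀ p q, X.Adj p q → (P p ↔ P q)) : ∀ {u v : γ}, X.Walk u v → (P u ↔ P v) := by
  intro u v w
  induction w with
  | nil => exact Iff.rfl
  | cons h _ ih => exact (hst _ _ h).trans ih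

/-- swap homomorphism between the two modular products -/
private def mpSwap (G : SimpleGraph α) (H : SimpleGraph β) :
    (modularProduct G H) →g (modularProduct H G) :=
  ⟨Prod.swap, by
    intro x y ha
    rcases mp_adj.mp ha with ⟨hne, hr⟩
    refine mp_adj.mpr ⟨fun e => hne (Prod.swap_injective e), ?_⟩
    rcases hr with ⟨e, a⟩ | ⟨a, e⟩ | ⟨a, b⟩ | ⟨n1, n2, na, nb⟩
    · exact Or.inr (Or.inl ⟨a, e⟩)
    · exact Or.inl ⟨e, a⟩
    · exact Or.inr (Or.inr (Or.inl ⟨b, a⟩))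
    · exact Or.inr (Or.inr (Or.inr ⟨n2, n1, nb, na⟩))⟩

/-- if both factors split into two cliques placed crosswise, the two vertices are
in different components -/
private lemma mp_unreach {AG BG : α → Prop} {AH BH : β → Prop}
    (hGuniv : ∀ a, AG a ∨ BG a)
    (clAG : ∀ u, AG u → ∀ v, AG v → u ≠ v → G.Adj u v)
    (clBG : ∀ u, BG u → ∀ v, BG v → u ≠ v → G.Adj u v)
    (crG : ∀ u, AG u → ∀ v, BG v → ¬ G.Adj u v)
    (hHuniv : ∀ a, AH a ∨ BH a)
    (clAH : ∀ u, AH u → ∀ v, AH v → u ≠ v → H.Adj u v)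
    (clBH : ∀ u, BH u → ∀ v, BH v → u ≠ v → H.Adj u v)
    (crH : ∀ u, AH u → ∀ v, BH v → ¬ H.Adj u v)
    {g g' : α} {h h' : β}
    (hg : AG g) (hg' : AG g') (hh : AH h) (hh'n : ¬ AH h') :
    ¬ (modularProduct G H).Reachable (g, h) (g', h') := by
  intro hre
  have sameG : ∀ u u', G.Adj u u' → (AG u ↔ AG u') := by
    have one : ∀ u u', G.Adj u u' → AG u → AG u' := fun u u' ha hu =>
      (hGuniv u').elim id fun hb => absurd ha (crG u hu u' hb)
    exact fun u u' ha => ⟨one u u' ha, one u' u ha.symm⟩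
  have sameH : ∀ u u', H.Adj u u' → (AH u ↔ AH u') := by
    have one : ∀ u u', H.Adj u u' → AH u → AH u' := fun u u' ha hu =>
      (hHuniv u').elim id fun hb => absurd ha (crH u hu u' hb)
    exact fun u u' ha => ⟨one u u' ha, one u' u ha.symm⟩
  have oppG : ∀ u u', u ≠ u' → ¬ G.Adj u u' → (AG u ↔ ¬ AG u') := by
    intro u u' hnuu hna
    constructor
    · exact fun hu hu' => hna (clAG u hu u' hu' hnuu)
    · intro hu'
      rcases hGuniv u with h1 | h1
      · exact h1
      · rcases hGuniv u' with h2 | h2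
        · exact absurd h2 hu'
        · exact absurd (clBG u h1 u' h2 hnuu) hna
  have oppH : ∀ u u', u ≠ u' → ¬ H.Adj u u' → (AH u ↔ ¬ AH u') := by
    intro u u' hnuu hna
    constructor
    · exact fun hu hu' => hna (clAH u hu u' hu' hnuu)
    · intro hu'
      rcases hHuniv u with h1 | h1
      · exact h1
      · rcases hHuniv u' with h2 | h2
        · exact absurd h2 hu'
        · exact absurd (clBH u h1 u' h2 hnuu) hna
  have hstep : ∀ p q : α × β, (modularProduct G H).Adj p q →
      ((AG p.1 ↔ AH p.2) ↔ (AG q.1 ↔ AH q.2)) := by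
    intro p q hadj
    rcases mp_adj.mp hadj with ⟨hne, hr⟩
    rcases hr with ⟨e, a⟩ | ⟨a, e⟩ | ⟨a, b⟩ | ⟨n1, n2, na, nb⟩
    · have h1 : AG p.1 ↔ AG q.1 := by rw [e]
      have h2 := sameH _ _ a
      tauto
    · have h1 := sameG _ _ a
      have h2 : AH p.2 ↔ AH q.2 := by rw [e]
      tauto
    · have h1 := sameG _ _ a
      have h2 := sameH _ _ b
      tauto
    · have h1 := oppG _ _ n1 na
      have h2 := oppH _ _ n2 nb
      tauto
  obtain ⟨w⟩ := hre
  have hres := (walk_pres hstep w).mp ⟨fun _ => hh, fun _ => hg⟩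
  exact hh'n (hres.mp hg')

end Aux

private lemma mp_key {α β : Type*} (G : SimpleGraph α) (H : SimpleGraph β)
    (hGnc : ¬ IsCompleteGraph G) (g g' : α) (h h' : β)
    (hgg' : g = g' ∨ G.Adj g g') (hne : h ≠ h') (hnadj : ¬ H.Adj h h') :
    (∃ w : (modularProduct G H).Walk (g, h) (g', h'), w.length ≤ 3) ∨
      (¬ (modularProduct G H).Reachable (g, h) (g', h') ∧ TwoCliques G ∧ TwoCliques H) := by
  by_cases hP2 : ∃ a, G.Adj g a ∧ ¬ G.Adj g' a ∧ a ≠ g'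
  · obtain ⟨a, k1, k2, k3⟩ := hP2
    exact Or.inl (wlen2 (mpr2 k1) (mpr4 k3 hne (fun e => k2 e.symm) hnadj))
  by_cases hP2' : ∃ a, G.Adj g' a ∧ ¬ G.Adj g a ∧ a ≠ g
  · obtain ⟨a, k1, k2, k3⟩ := hP2'
    exact Or.inl (wlen2 (mpr4 (Ne.symm k3) hne k2 hnadj) (mpr2 k1.symm))
  have fact1 : ∀ a, G.Adj g a → a ≠ g' → G.Adj g' a := fun a k1 k2 =>
    by_contra fun k3 => hP2 ⟨a, k1, k3, k2⟩
  have fact2 : ∀ a, G.Adj g' a → a ≠ g → G.Adj g a := fun a k1 k2 =>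
    by_contra fun k3 => hP2' ⟨a, k1, k3, k2⟩
  by_cases hCN : ∃ t, H.Adj h t ∧ H.Adj h' t
  · obtain ⟨t, k1, k2⟩ := hCN
    refine Or.inl (wlen2 (mpr1 k1) ?_)
    rcases hgg' with rfl | hadj
    · exact mpr1 k2.symm
    · exact mpr3 hadj k2.symm
  by_cases hA0 : ∃ a, a ≠ g ∧ a ≠ g' ∧ ¬ G.Adj g a ∧ ¬ G.Adj g' a
  · obtain ⟨a₀, ha1, ha2, ha3, ha4⟩ := hA0
    by_cases hCNN : ∃ t, t ≠ h ∧ t ≠ h' ∧ ¬ H.Adj h t ∧ ¬ H.Adj h' t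
    · obtain ⟨t, ht1, ht2, ht3, ht4⟩ := hCNN
      exact Or.inl (wlen2 (mpr4 (Ne.symm ha1) (Ne.symm ht1) ha3 ht3)
        (mpr4 ha2 ht2 (fun e => ha4 e.symm) (fun e => ht4 e.symm)))
    by_cases hAcl : ∃ t t', H.Adj h t ∧ H.Adj h t' ∧ t ≠ t' ∧ ¬ H.Adj t t'
    · obtain ⟨t, t', k1, k2, k3, k4⟩ := hAcl
      refine Or.inl (wlen3 (mpr1 k1) (mpr4 (Ne.symm ha1) k3 ha3 k4)
        (mpr4 ha2 ?_ (fun e => ha4 e.symm) (fun e => hCN ⟨t', k2, e.symm⟩)))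
      intro e
      exact hnadj (e ▸ k2)
    by_cases hBcl : ∃ t t', H.Adj h' t ∧ H.Adj h' t' ∧ t ≠ t' ∧ ¬ H.Adj t t'
    · obtain ⟨t, t', k1, k2, k3, k4⟩ := hBcl
      refine Or.inl (wlen3
        (mpr4 (Ne.symm ha1) (fun e => hnadj (by subst e; exact k1.symm))
          ha3 (fun a => hCN ⟨t, a, k1⟩))
        (mpr4 ha2 k3 (fun e => ha4 e.symm) k4)
        (mpr1 k2.symm))
    by_cases hCross : ∃ t t', H.Adj h t ∧ H.Adj h' t' ∧ H.Adj t t'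
    · obtain ⟨t, t', k1, k2, k3⟩ := hCross
      refine Or.inl (wlen3 (mpr1 k1) ?_ (mpr1 k2.symm))
      rcases hgg' with rfl | hadj
      · exact mpr1 k3
      · exact mpr3 hadj k3
    by_cases hGA : ∃ a a', G.Adj g a ∧ G.Adj g' a ∧ G.Adj g a' ∧ G.Adj g' a' ∧
        a ≠ a' ∧ ¬ G.Adj a a'
    · obtain ⟨a, a', k1, k2, k3, k4, k5, k6⟩ := hGA
      exact Or.inl (wlen3 (mpr2 k1) (mpr4 k5 hne k6 hnadj) (mpr2 k4.symm))
    by_cases hGB : ∃ b b', ¬ G.Adj g b ∧ ¬ G.Adj g' b ∧ b ≠ g ∧ b ≠ g' ∧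
        ¬ G.Adj g b' ∧ ¬ G.Adj g' b' ∧ b' ≠ g ∧ b' ≠ g' ∧ b ≠ b' ∧ ¬ G.Adj b b'
    · obtain ⟨b, b', k1, k2, k3, k4, k5, k6, k7, k8, k9, k10⟩ := hGB
      exact Or.inl (wlen3 (mpr4 (Ne.symm k3) hne k1 hnadj)
        (mpr4 k9 (Ne.symm hne) k10 (fun e => hnadj e.symm))
        (mpr4 k8 hne (fun e => k6 e.symm) hnadj))
    by_cases hGX : ∃ a b, G.Adj g a ∧ G.Adj g' a ∧ ¬ G.Adj g b ∧ ¬ G.Adj g' b ∧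
        b ≠ g ∧ b ≠ g' ∧ G.Adj a b
    · obtain ⟨a, b, k1, k2, k3, k4, k5, k6, k7⟩ := hGX
      exact Or.inl (wlen3 (mpr2 k1) (mpr2 k7)
        (mpr4 k6 hne (fun e => k4 e.symm) hnadj))
    -- all constructions failed: both graphs are unions of two cliques
    right
    -- H side predicates
    have hHuniv : ∀ t, (t = h ∨ H.Adj h t) ∨ (t = h' ∨ H.Adj h' t) := by
      intro t
      by_cases e1 : t = h
      · exact Or.inl (Or.inl e1)
      by_cases e2 : t = h'
      · exact Or.inr (Or.inl e2)
      by_cases a1 : H.Adj h t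
      · exact Or.inl (Or.inr a1)
      by_cases a2 : H.Adj h' t
      · exact Or.inr (Or.inr a2)
      exact absurd ⟨t, e1, e2, a1, a2⟩ hCNN
    have hHdisj : ∀ t, (t = h ∨ H.Adj h t) → (t = h' ∨ H.Adj h' t) → False := by
      rintro t (rfl | a1) (e2 | a2)
      · exact hne e2
      · exact hnadj a2.symm
      · exact hnadj (e2 ▸ a1)
      · exact hCN ⟨t, a1, a2⟩
    have clAH : ∀ u, (u = h ∨ H.Adj h u) → ∀ v, (v = h ∨ H.Adj h v) → u ≠ v → H.Adj u v := by
      rintro u (rfl | a1) v (rfl | a2) huv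
      · exact absurd rfl huv
      · exact a2
      · exact a1.symm
      · exact by_contra fun hc => hAcl ⟨u, v, a1, a2, huv, hc⟩
    have clBH : ∀ u, (u = h' ∨ H.Adj h' u) → ∀ v, (v = h' ∨ H.Adj h' v) → u ≠ v → H.Adj u v := by
      rintro u (rfl | a1) v (rfl | a2) huv
      · exact absurd rfl huv
      · exact a2
      · exact a1.symm
      · exact by_contra fun hc => hBcl ⟨u, v, a1, a2, huv, hc⟩
    have crH : ∀ u, (u = h ∨ H.Adj h u) → ∀ v, (v = h' ∨ H.Adj h' v) → ¬ H.Adj u v := by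
      rintro u (rfl | a1) v (rfl | a2) hc
      · exact hnadj hc
      · exact hCN ⟨v, hc, a2⟩
      · exact hCN ⟨u, a1, hc.symm⟩
      · exact hCross ⟨u, v, a1, a2, hc⟩
    -- G side predicates
    have hGuniv : ∀ a, (a = g ∨ a = g' ∨ G.Adj g a) ∨ ¬ (a = g ∨ a = g' ∨ G.Adj g a) :=
      fun a => em _
    have hB1 : ∀ a, ¬ (a = g ∨ a = g' ∨ G.Adj g a) →
        a ≠ g ∧ a ≠ g' ∧ ¬ G.Adj g a ∧ ¬ G.Adj g' a := by
      intro a ha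
      have n1 : a ≠ g := fun e => ha (Or.inl e)
      have n2 : a ≠ g' := fun e => ha (Or.inr (Or.inl e))
      have n3 : ¬ G.Adj g a := fun e => ha (Or.inr (Or.inr e))
      exact ⟨n1, n2, n3, fun hc => n3 (fact2 a hc n1)⟩
    have hA1 : ∀ a, (a = g ∨ a = g' ∨ G.Adj g a) → a ≠ g → G.Adj g a := by
      rintro a (rfl | rfl | k) hag
      · exact absurd rfl hag
      · rcases hgg' with e | e
        · exact absurd e.symm hag
        · exact e
      · exact k
    have hA2 : ∀ a, (a = g ∨ a = g' ∨ G.Adj g a) → a ≠ g' → G.Adj g' a := by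
      rintro a (rfl | rfl | k) hag'
      · rcases hgg' with e | e
        · exact absurd e hag'
        · exact e.symm
      · exact absurd rfl hag'
      · exact fact1 a k hag'
    have clAG : ∀ u, (u = g ∨ u = g' ∨ G.Adj g u) → ∀ v, (v = g ∨ v = g' ∨ G.Adj g v) →
        u ≠ v → G.Adj u v := by
      intro u hu v hv huv
      rcases hu with rfl | rfl | k3
      · exact hA1 v hv (Ne.symm huv)
      · exact hA2 v hv (Ne.symm huv)
      · by_cases hu' : u = g'
        · subst hu'
          exact hA2 v hv (Ne.symm huv)
        · have k4 : G.Adj g' u := fact1 u k3 hu'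
          rcases hv with rfl | rfl | k5
          · exact k3.symm
          · exact k4.symm
          · by_cases hv' : v = g'
            · subst hv'
              exact k4.symm
            · exact by_contra fun hc =>
                hGA ⟨u, v, k3, k4, k5, fact1 v k5 hv', huv, hc⟩
    have clBG : ∀ u, ¬ (u = g ∨ u = g' ∨ G.Adj g u) → ∀ v, ¬ (v = g ∨ v = g' ∨ G.Adj g v) →
        u ≠ v → G.Adj u v := by
      intro u hu v hv huv
      obtain ⟨n1, n2, n3, n4⟩ := hB1 u hu
      obtain ⟨m1, m2, m3, m4⟩ := hB1 v hv
      exact by_contra fun hc => hGB ⟨u, v, n3, n4, n1, n2, m3, m4, m1, m2, huv, hc⟩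
    have crG : ∀ u, (u = g ∨ u = g' ∨ G.Adj g u) → ∀ v, ¬ (v = g ∨ v = g' ∨ G.Adj g v) →
        ¬ G.Adj u v := by
      intro u hu v hv hc
      obtain ⟨m1, m2, m3, m4⟩ := hB1 v hv
      rcases hu with rfl | rfl | k3
      · exact m3 hc
      · exact m4 hc
      · by_cases hu' : u = g'
        · subst hu'
          exact m4 hc
        · exact hGX ⟨u, v, k3, fact1 u k3 hu', m3, m4, m1, m2, hc⟩
    refine ⟨?_, ?_, ?_⟩
    · exact mp_unreach hGuniv clAG clBG crG hHuniv clAH clBH crH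
        (Or.inl rfl) (Or.inr (Or.inl rfl)) (Or.inl rfl)
        (fun hm => hHdisj h' hm (Or.inl rfl))
    · refine ⟨{a | a = g ∨ a = g' ∨ G.Adj g a}, {a | a = g ∨ a = g' ∨ G.Adj g a}ᶜ,
        ⟨g, Or.inl rfl⟩, ⟨a₀, ?_⟩, Set.union_compl_self _, Set.inter_compl_self _,
        fun u hu v hv huv => clAG u hu v hv huv,
        fun u hu v hv huv => clBG u hu v hv huv,
        fun u hu v hv => crG u hu v hv⟩
      rintro (e | e | e)
      · exact ha1 e
      · exact ha2 e
      · exact ha3 e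
    · refine ⟨{t | t = h ∨ H.Adj h t}, {t | t = h' ∨ H.Adj h' t},
        ⟨h, Or.inl rfl⟩, ⟨h', Or.inl rfl⟩, ?_, ?_,
        fun u hu v hv huv => clAH u hu v hv huv,
        fun u hu v hv huv => clBH u hu v hv huv,
        fun u hu v hv => crH u hu v hv⟩
      · ext t
        simp only [Set.mem_union, Set.mem_setOf_eq, Set.mem_univ, iff_true]
        exact hHuniv t
      · ext t
        simp only [Set.mem_inter_iff, Set.mem_setOf_eq, Set.mem_empty_iff_false, iff_false,
          not_and]
        exact fun h1 h2 => hHdisj t h1 h2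
  · -- no common non-neighbor of g, g' : g and g' dominate everything
    have both : ∀ w, w ≠ g → w ≠ g' → G.Adj g w ∧ G.Adj g' w := by
      intro w w1 w2
      have hor : G.Adj g w ∨ G.Adj g' w := by
        by_contra hc
        push_neg at hc
        exact hA0 ⟨w, w1, w2, hc.1, hc.2⟩
      rcases hor with ha | ha
      · exact ⟨ha, fact1 w ha w2⟩
      · exact ⟨fact2 w ha w1, ha⟩
    have hgall : ∀ w, w ≠ g → G.Adj g w := by
      intro w hw
      by_cases h2 : w = g'
      · subst h2
        rcases hgg' with e | e
        · exact absurd e.symm hw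
        · exact e
      · exact (both w hw h2).1
    have hg'all : ∀ w, w ≠ g' → G.Adj g' w := by
      intro w hw
      by_cases h2 : w = g
      · subst h2
        rcases hgg' with e | e
        · exact absurd e hw
        · exact e.symm
      · exact (both w h2 hw).2
    have hGw : ∃ u v : α, u ≠ v ∧ ¬ G.Adj u v := by
      by_contra hc
      push_neg at hc
      exact hGnc fun u v huv => hc u v huv
    obtain ⟨u, v, huv, hnuv⟩ := hGw
    have hug : u ≠ g := by
      rintro rfl
      exact hnuv (hgall v (Ne.symm huv))
    have hug' : u ≠ g' := by
      rintro rfl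
      exact hnuv (hg'all v (Ne.symm huv))
    have hvg' : v ≠ g' := by
      rintro rfl
      exact hnuv (hg'all u huv).symm
    exact Or.inl (wlen3 (mpr2 (hgall u hug)) (mpr4 huv hne hnuv hnadj)
      (mpr2 (hg'all v hvg').symm))

/-- if neither factor is complete, any two vertices of the modular
product are at distance at most three, or they are not joined by a path and both
factors are disjoint unions of two cliques. -/
theorem modularProduct_dist_le_three {α β : Type*} (G : SimpleGraph α) (H : SimpleGraph β)
    (hG : ¬ IsCompleteGraph G) (hH : ¬ IsCompleteGraph H) (x y : α × β) :
    (modularProduct G H).edist x y ≤ 3 ∨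
      (¬ (modularProduct G H).Reachable x y ∧ TwoCliques G ∧ TwoCliques H) := by
  obtain ⟨g, h⟩ := x
  obtain ⟨g', h'⟩ := y
  by_cases hxy : (g, h) = (g', h')
  · left
    rw [hxy, SimpleGraph.edist_self]
    exact zero_le
  by_cases hadj : (modularProduct G H).Adj (g, h) (g', h')
  · exact Or.inl (edist_le_three_of_walk (wlen1 hadj))
  have hnrel : ¬ ((g = g' ∧ H.Adj h h') ∨ (G.Adj g g' ∧ h = h') ∨
      (G.Adj g g' ∧ H.Adj h h') ∨ (g ≠ g' ∧ h ≠ h' ∧ ¬ G.Adj g g' ∧ ¬ H.Adj h h')) :=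
    fun hr => hadj (mp_adj.mpr ⟨hxy, hr⟩)
  by_cases hg : g = g'
  · subst hg
    have hne : h ≠ h' := fun e => hxy (by rw [e])
    have hnadjH : ¬ H.Adj h h' := fun ha => hnrel (Or.inl ⟨rfl, ha⟩)
    rcases mp_key G H hG g g h h' (Or.inl rfl) hne hnadjH with hk | hk
    · exact Or.inl (edist_le_three_of_walk hk)
    · exact Or.inr hk
  · by_cases hh : h = h'
    · subst hh
      have hnadjG : ¬ G.Adj g g' := fun ha => hnrel (Or.inr (Or.inl ⟨ha, rfl⟩))
      rcases mp_key H G hH h h g g' (Or.inl rfl) hg hnadjG with ⟨w, hw⟩ | ⟨hnr, hTH, hTG⟩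
      · exact Or.inl (edist_le_three_of_walk
          ⟨w.map (mpSwap H G), (SimpleGraph.Walk.length_map _ _).le.trans hw⟩)
      · exact Or.inr ⟨fun hr => hnr (hr.map (mpSwap G H)), hTG, hTH⟩
    · by_cases hadjG : G.Adj g g'
      · have hnadjH : ¬ H.Adj h h' := fun ha => hnrel (Or.inr (Or.inr (Or.inl ⟨hadjG, ha⟩)))
        rcases mp_key G H hG g g' h h' (Or.inr hadjG) hh hnadjH with hk | hk
        · exact Or.inl (edist_le_three_of_walk hk)
        · exact Or.inr hk
      · have hadjH : H.Adj h h' := by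
          by_contra hn
          exact hnrel (Or.inr (Or.inr (Or.inr ⟨hg, hh, hadjG, hn⟩)))
        rcases mp_key H G hH h h' g g' (Or.inr hadjH) hg hadjG with ⟨w, hw⟩ | ⟨hnr, hTH, hTG⟩
        · exact Or.inl (edist_le_three_of_walk
            ⟨w.map (mpSwap H G), (SimpleGraph.Walk.length_map _ _).le.trans hw⟩)
        · exact Or.inr ⟨fun hr => hnr (hr.map (mpSwap G H)), hTG, hTH⟩
end

section
/- Let G and H be simple graphs, neither of which is complete, and suppose it is not the case that both G and H are a disjoint union of two cliques. Then d_{G⋄H}((g,h),(g',h')) = 3 if and only if at least one of the following two conditions holds: (13) N_G[g]=N_G[g'], d_H(h,h') ≥ 3, and (g is universal in G, or {h,h'} is a γ_H-pair); (14) N_H[h]=N_H[h'], d_G(g,g') ≥ 3, and (h is universal in H, or {g,g'} is a γ_G-pair). -/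
open SimpleGraph

/-! ### Auxiliary lemmas -/

section Aux

variable {α β : Type*} (G : SimpleGraph α) (H : SimpleGraph β)

lemma mem_closedNbr {a v : α} : a ∈ closedNbr G v ↔ a = v ∨ G.Adj v a := by
  simp [closedNbr]

lemma mem_closedNbr_comm {a v : α} : a ∈ closedNbr G v ↔ v ∈ closedNbr G a := by
  rw [mem_closedNbr, mem_closedNbr, G.adj_comm, eq_comm]

lemma self_mem_closedNbr (v : α) : v ∈ closedNbr G v := by simp [mem_closedNbr]

lemma mp_adj_s3 (a c : α) (b d : β) :
    (modularProduct G H).Adj (a, b) (c, d) ↔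
      (((a ≠ c ∨ b ≠ d)) ∧ c ∈ closedNbr G a ∧ d ∈ closedNbr H b) ∨
      (c ∉ closedNbr G a ∧ d ∉ closedNbr H b) := by
  simp only [modularProduct, fromRel_adj, mem_closedNbr, ne_eq, Prod.mk.injEq, not_and, not_or]
  by_cases hac : a = c <;> by_cases hbd : b = d <;>
    by_cases hGa : G.Adj a c <;> by_cases hHa : H.Adj b d <;>
    simp_all [G.adj_comm c a, H.adj_comm d b, eq_comm]

lemma mp_adj_swap (a c : α) (b d : β) :
    (modularProduct G H).Adj (a, b) (c, d) ↔ (modularProduct H G).Adj (b, a) (d, c) := by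
  rw [mp_adj_s3, mp_adj_s3]; tauto

variable {X : SimpleGraph α}

lemma walk_le_two {u v : α} (p : X.Walk u v) (hl : p.length ≤ 2) :
    u = v ∨ X.Adj u v ∨ ∃ w, X.Adj u w ∧ X.Adj w v := by
  cases p with
  | nil => exact Or.inl rfl
  | cons h q =>
    cases q with
    | nil => exact Or.inr (Or.inl h)
    | cons h' r =>
      simp only [SimpleGraph.Walk.length_cons] at hl
      have h0 : r.length = 0 := by omega
      have := SimpleGraph.Walk.eq_of_length_eq_zero h0
      subst this
      exact Or.inr (Or.inr ⟨_, h, h'⟩)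

lemma three_le_edist_iff {u v : α} :
    3 ≤ X.edist u v ↔ u ≠ v ∧ ¬X.Adj u v ∧ ∀ w, ¬(X.Adj u w ∧ X.Adj w v) := by
  constructor
  · intro h3
    refine ⟨?_, ?_, ?_⟩
    · rintro rfl
      rw [SimpleGraph.edist_self] at h3
      exact absurd h3 (by norm_num)
    · intro hadj
      rw [SimpleGraph.edist_eq_one_iff_adj.mpr hadj] at h3
      exact absurd h3 (by norm_num)
    · rintro w ⟨h1, h2⟩
      have hle := SimpleGraph.edist_le (SimpleGraph.Walk.cons h1 h2.toWalk)
      simp only [SimpleGraph.Walk.length_cons, SimpleGraph.Walk.length_nil] at hle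
      have : (3 : ℕ∞) ≤ (0 + 1 + 1 : ℕ) := le_trans h3 hle
      norm_num at this
  · rintro ⟨hne, hadj, hcom⟩
    by_contra hlt
    push_neg at hlt
    have hne_top : X.edist u v ≠ ⊤ := by
      intro h; rw [h] at hlt; exact absurd hlt (by simp)
    obtain ⟨p, hp⟩ := SimpleGraph.exists_walk_of_edist_ne_top hne_top
    have hpl : (p.length : ℕ∞) < 3 := by rw [hp]; exact hlt
    have hpl' : p.length ≤ 2 := by exact_mod_cast Order.lt_succ_iff.mp (by exact_mod_cast hpl)
    rcases walk_le_two p hpl' with h | h | ⟨w, hw⟩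
    · exact hne h
    · exact hadj h
    · exact hcom w hw

lemma edist_le_three {u v : α} (a b : α) (h1 : X.Adj u a) (h2 : X.Adj a b) (h3 : X.Adj b v) :
    X.edist u v ≤ 3 := by
  have hle := SimpleGraph.edist_le (SimpleGraph.Walk.cons h1 (SimpleGraph.Walk.cons h2 h3.toWalk))
  simpa using hle

/-- If exactly the `G`-side is "close" and there is no common neighbour, condition (13) holds. -/
lemma case13_of {g g' : α} {h h' : β}
    (hP : g' ∈ closedNbr G g) (hQ : h' ∉ closedNbr H h)
    (hno : ∀ z, ¬((modularProduct G H).Adj (g, h) z ∧ (modularProduct G H).Adj z (g', h'))) :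
    closedNbr G g = closedNbr G g' ∧ 3 ≤ H.edist h h' ∧
      (_root_.IsUniversal G g ∨ gammaPair H h h') := by
  have hQ2 : h ∉ closedNbr H h' := fun hc => hQ ((mem_closedNbr_comm H).mp hc)
  have hcap : ∀ b, b ∈ closedNbr H h → b ∈ closedNbr H h' → False := by
    intro b hb hb'
    have hbh : b ≠ h := by rintro rfl; exact hQ2 hb'
    have hbh' : b ≠ h' := by rintro rfl; exact hQ hb
    apply hno (g, b)
    constructor
    · rw [mp_adj_s3]; left
      exact ⟨Or.inr hbh.symm, self_mem_closedNbr G g, hb⟩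
    · rw [mp_adj_s3]; left
      exact ⟨Or.inr hbh', hP, (mem_closedNbr_comm H).mp hb'⟩
  have hd3 : 3 ≤ H.edist h h' := by
    rw [three_le_edist_iff]
    refine ⟨?_, ?_, ?_⟩
    · rintro rfl; exact hQ (self_mem_closedNbr H h)
    · intro ha; exact hQ ((mem_closedNbr _).mpr (Or.inr ha))
    · rintro w ⟨hw1, hw2⟩
      exact hcap w ((mem_closedNbr _).mpr (Or.inr hw1)) ((mem_closedNbr _).mpr (Or.inr hw2.symm))
  have hsub1 : closedNbr G g ⊆ closedNbr G g' := by
    intro a ha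
    by_contra han
    have hag : a ≠ g := by rintro rfl; exact han ((mem_closedNbr_comm G).mp hP)
    apply hno (a, h)
    constructor
    · rw [mp_adj_s3]; left; exact ⟨Or.inl hag.symm, ha, self_mem_closedNbr H h⟩
    · rw [mp_adj_s3]; right
      exact ⟨fun hc => han ((mem_closedNbr_comm G).mp hc), hQ⟩
  have hsub2 : closedNbr G g' ⊆ closedNbr G g := by
    intro a ha
    by_contra han
    have hag' : a ≠ g' := by rintro rfl; exact han hP
    apply hno (a, h')
    constructor
    · rw [mp_adj_s3]; right; exact ⟨han, hQ⟩
    · rw [mp_adj_s3]; left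
      exact ⟨Or.inl hag', (mem_closedNbr_comm G).mp ha, self_mem_closedNbr H h'⟩
  have heq : closedNbr G g = closedNbr G g' := Set.Subset.antisymm hsub1 hsub2
  refine ⟨heq, hd3, ?_⟩
  by_cases hu : _root_.IsUniversal G g
  · exact Or.inl hu
  · right
    refine ⟨Set.eq_empty_iff_forall_notMem.mpr fun b hb => hcap b hb.1 hb.2, ?_⟩
    rw [Set.eq_univ_iff_forall]
    intro b
    by_contra hb
    rw [Set.mem_union] at hb
    push_neg at hb
    obtain ⟨hb1, hb2⟩ := hb
    obtain ⟨a, ha⟩ := (Set.ne_univ_iff_exists_notMem _).mp hu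
    apply hno (a, b)
    constructor
    · rw [mp_adj_s3]; right; exact ⟨ha, hb1⟩
    · rw [mp_adj_s3]; right
      refine ⟨fun hc => ha ?_, fun hc => hb2 ((mem_closedNbr_comm H).mp hc)⟩
      rw [heq]; exact (mem_closedNbr_comm G).mp hc

/-- From the data of condition (13), there is no common neighbour. -/
lemma no_common_of13 {g g' : α} {h h' : β}
    (hNg : closedNbr G g = closedNbr G g')
    (hcap : ∀ b, b ∈ closedNbr H h → b ∈ closedNbr H h' → False)
    (hor : _root_.IsUniversal G g ∨ closedNbr H h ∪ closedNbr H h' = Set.univ) :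
    ∀ z, ¬((modularProduct G H).Adj (g, h) z ∧ (modularProduct G H).Adj z (g', h')) := by
  rintro ⟨a, b⟩ ⟨h1, h2⟩
  rw [mp_adj_s3] at h1 h2
  rcases h1 with ⟨-, ha, hb⟩ | ⟨ha, hb⟩ <;> rcases h2 with ⟨-, ha', hb'⟩ | ⟨ha', hb'⟩
  · exact hcap b hb ((mem_closedNbr_comm H).mp hb')
  · apply ha'
    have : a ∈ closedNbr G g' := by rw [← hNg]; exact ha
    exact (mem_closedNbr_comm G).mp this
  · apply ha
    rw [hNg]
    exact (mem_closedNbr_comm G).mp ha'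
  · rcases hor with hu | hcup
    · exact ha (by rw [_root_.IsUniversal] at hu; rw [hu]; trivial)
    · have : b ∈ closedNbr H h ∪ closedNbr H h' := by rw [hcup]; trivial
      rcases this with hc | hc
      · exact hb hc
      · exact hb' ((mem_closedNbr_comm H).mp hc)

/-- Midpoints of a path of length three, universal-vertex case. -/
lemma mids_univ {g g' : α} {h h' : β}
    (hGnc : ¬ IsCompleteGraph G) (hu : _root_.IsUniversal G g)
    (hNg : closedNbr G g = closedNbr G g') (hQ : h' ∉ closedNbr H h) :
    ∃ u v, (modularProduct G H).Adj (g, h) u ∧ (modularProduct G H).Adj u v ∧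
      (modularProduct G H).Adj v (g', h') := by
  rw [IsCompleteGraph] at hGnc
  push_neg at hGnc
  obtain ⟨a1, a2, hne, hnadj⟩ := hGnc
  have hmem : ∀ w : α, w ∈ closedNbr G g := by
    intro w; rw [_root_.IsUniversal] at hu; rw [hu]; trivial
  have hmem' : ∀ w : α, w ∈ closedNbr G g' := by intro w; rw [← hNg]; exact hmem w
  have ha1g : a1 ≠ g := by
    rintro rfl
    rcases (mem_closedNbr _).mp (hmem a2) with e | ha
    · exact hne e.symm
    · exact hnadj ha
  have ha2g' : a2 ≠ g' := by
    rintro rfl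
    rcases (mem_closedNbr _).mp (hmem' a1) with e | ha
    · exact hne e
    · exact hnadj ha.symm
  refine ⟨(a1, h), (a2, h'), ?_, ?_, ?_⟩
  · rw [mp_adj_s3]; left; exact ⟨Or.inl ha1g.symm, hmem a1, self_mem_closedNbr H h⟩
  · rw [mp_adj_s3]; right
    refine ⟨?_, hQ⟩
    rw [mem_closedNbr]
    rintro (e | ha)
    · exact hne e.symm
    · exact hnadj ha
  · rw [mp_adj_s3]; left
    exact ⟨Or.inl ha2g', (mem_closedNbr_comm G).mp (hmem' a2), self_mem_closedNbr H h'⟩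

/-- Midpoints of a path of length three, general case. -/
lemma exists_mids {g g' : α} {h h' : β}
    (hGnc : ¬ IsCompleteGraph G)
    (hGH : ¬ (TwoCliques G ∧ TwoCliques H))
    (hNg : closedNbr G g = closedNbr G g')
    (hQ : h' ∉ closedNbr H h) (hQ2 : h ∉ closedNbr H h')
    (hor : _root_.IsUniversal G g ∨ gammaPair H h h') :
    ∃ u v, (modularProduct G H).Adj (g, h) u ∧ (modularProduct G H).Adj u v ∧
      (modularProduct G H).Adj v (g', h') := by
  by_cases hu : _root_.IsUniversal G g
  · exact mids_univ G H hGnc hu hNg hQ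
  rcases hor with hu' | ⟨hcap, hcup⟩
  · exact absurd hu' hu
  have hcap' : ∀ b, b ∈ closedNbr H h → b ∈ closedNbr H h' → False := by
    intro b h1 h2
    exact Set.eq_empty_iff_forall_notMem.mp hcap b ⟨h1, h2⟩
  obtain ⟨a₀, ha₀⟩ := (Set.ne_univ_iff_exists_notMem _).mp hu
  have hg'a₀ : g' ∉ closedNbr G a₀ := by
    intro hc
    apply ha₀
    rw [hNg]
    exact (mem_closedNbr_comm G).mp hc
  by_cases c3 : ∃ a a', a ∉ closedNbr G g ∧ G.Adj a a' ∧ a' ∈ closedNbr G g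
  · obtain ⟨a, a', ha, haa', ha'⟩ := c3
    have ha'g' : a' ≠ g' := by
      rintro rfl
      apply ha
      rw [hNg]
      exact (mem_closedNbr _).mpr (Or.inr haa'.symm)
    refine ⟨(a, h'), (a', h'), ?_, ?_, ?_⟩
    · rw [mp_adj_s3]; right; exact ⟨ha, hQ⟩
    · rw [mp_adj_s3]; left
      exact ⟨Or.inl haa'.ne, (mem_closedNbr _).mpr (Or.inr haa'), self_mem_closedNbr H h'⟩
    · rw [mp_adj_s3]; left
      refine ⟨Or.inl ha'g', ?_, self_mem_closedNbr H h'⟩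
      apply (mem_closedNbr_comm G).mp
      rw [← hNg]; exact ha'
  by_cases c1 : ∃ u v, u ∈ closedNbr G g ∧ v ∈ closedNbr G g ∧ u ≠ v ∧ ¬G.Adj u v
  · obtain ⟨u, v, hum, hvm, huv, hnadj⟩ := c1
    have hug : u ≠ g := by
      rintro rfl
      rcases (mem_closedNbr _).mp hvm with e | ha
      · exact huv e.symm
      · exact hnadj ha
    have hvg' : v ≠ g' := by
      rintro rfl
      have hum' : u ∈ closedNbr G v := by rw [← hNg]; exact hum
      rcases (mem_closedNbr _).mp hum' with e | ha
      · exact huv e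
      · exact hnadj ha.symm
    refine ⟨(u, h), (v, h'), ?_, ?_, ?_⟩
    · rw [mp_adj_s3]; left; exact ⟨Or.inl hug.symm, hum, self_mem_closedNbr H h⟩
    · rw [mp_adj_s3]; right
      refine ⟨?_, hQ⟩
      rw [mem_closedNbr]
      rintro (e | ha)
      · exact huv e.symm
      · exact hnadj ha
    · rw [mp_adj_s3]; left
      refine ⟨Or.inl hvg', ?_, self_mem_closedNbr H h'⟩
      apply (mem_closedNbr_comm G).mp
      rw [← hNg]; exact hvm
  by_cases c2 : ∃ u v, u ∉ closedNbr G g ∧ v ∉ closedNbr G g ∧ u ≠ v ∧ ¬G.Adj u v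
  · obtain ⟨u, v, hum, hvm, huv, hnadj⟩ := c2
    have hg'v : g' ∉ closedNbr G v := by
      intro hc
      apply hvm
      rw [hNg]
      exact (mem_closedNbr_comm G).mp hc
    refine ⟨(u, h'), (v, h), ?_, ?_, ?_⟩
    · rw [mp_adj_s3]; right; exact ⟨hum, hQ⟩
    · rw [mp_adj_s3]; right
      refine ⟨?_, hQ2⟩
      rw [mem_closedNbr]
      rintro (e | ha)
      · exact huv e.symm
      · exact hnadj ha
    · rw [mp_adj_s3]; right; exact ⟨hg'v, hQ⟩
  by_cases c4 : ∃ b b', b ∈ closedNbr H h ∧ b' ∈ closedNbr H h ∧ b ≠ b' ∧ ¬H.Adj b b'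
  · obtain ⟨b, b', hbm, hbm', hbb', hnadj⟩ := c4
    have hbh : b ≠ h := by
      rintro rfl
      rcases (mem_closedNbr _).mp hbm' with e | ha
      · exact hbb' e.symm
      · exact hnadj ha
    refine ⟨(g, b), (a₀, b'), ?_, ?_, ?_⟩
    · rw [mp_adj_s3]; left; exact ⟨Or.inr hbh.symm, self_mem_closedNbr G g, hbm⟩
    · rw [mp_adj_s3]; right
      refine ⟨ha₀, ?_⟩
      rw [mem_closedNbr]
      rintro (e | ha)
      · exact hbb' e.symm
      · exact hnadj ha
    · rw [mp_adj_s3]; right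
      refine ⟨hg'a₀, fun hc => hcap' b' hbm' ((mem_closedNbr_comm H).mp hc)⟩
  by_cases c5 : ∃ b b', b ∈ closedNbr H h' ∧ b' ∈ closedNbr H h' ∧ b ≠ b' ∧ ¬H.Adj b b'
  · obtain ⟨b, b', hbm, hbm', hbb', hnadj⟩ := c5
    have hbh' : b ≠ h' := by
      rintro rfl
      rcases (mem_closedNbr _).mp hbm' with e | ha
      · exact hbb' e.symm
      · exact hnadj ha
    refine ⟨(a₀, b'), (g', b), ?_, ?_, ?_⟩
    · rw [mp_adj_s3]; right
      exact ⟨ha₀, fun hc => hcap' b' hc hbm'⟩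
    · rw [mp_adj_s3]; right
      refine ⟨hg'a₀, ?_⟩
      rw [mem_closedNbr]
      rintro (e | ha)
      · exact hbb' e
      · exact hnadj ha.symm
    · rw [mp_adj_s3]; left
      exact ⟨Or.inr hbh', self_mem_closedNbr G g', (mem_closedNbr_comm H).mp hbm⟩
  by_cases c6 : ∃ b b', b ∈ closedNbr H h' ∧ b' ∈ closedNbr H h ∧ H.Adj b b'
  · obtain ⟨b, b', hbm, hbm', hadj⟩ := c6
    refine ⟨(a₀, b), (a₀, b'), ?_, ?_, ?_⟩
    · rw [mp_adj_s3]; right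
      exact ⟨ha₀, fun hc => hcap' b hc hbm⟩
    · rw [mp_adj_s3]; left
      exact ⟨Or.inr hadj.ne, self_mem_closedNbr G a₀, (mem_closedNbr _).mpr (Or.inr hadj)⟩
    · rw [mp_adj_s3]; right
      exact ⟨hg'a₀, fun hc => hcap' b' hbm' ((mem_closedNbr_comm H).mp hc)⟩
  exfalso
  apply hGH
  constructor
  · refine ⟨closedNbr G g, (closedNbr G g)ᶜ, ⟨g, self_mem_closedNbr G g⟩, ⟨a₀, ha₀⟩,
      Set.union_compl_self _, Set.inter_compl_self _, ?_, ?_, ?_⟩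
    · intro u hu v hv hne
      by_contra hnadj
      exact c1 ⟨u, v, hu, hv, hne, hnadj⟩
    · intro u hu v hv hne
      by_contra hnadj
      exact c2 ⟨u, v, hu, hv, hne, hnadj⟩
    · intro u hu v hv hadj
      exact c3 ⟨v, u, hv, hadj.symm, hu⟩
  · refine ⟨closedNbr H h, closedNbr H h', ⟨h, self_mem_closedNbr H h⟩,
      ⟨h', self_mem_closedNbr H h'⟩, hcup, hcap, ?_, ?_, ?_⟩
    · intro u hu v hv hne
      by_contra hnadj
      exact c4 ⟨u, v, hu, hv, hne, hnadj⟩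
    · intro u hu v hv hne
      by_contra hnadj
      exact c5 ⟨u, v, hu, hv, hne, hnadj⟩
    · intro u hu v hv hadj
      exact c6 ⟨v, u, hv, hu, hadj.symm⟩

end Aux

/-- characterization of distance three in the modular product. -/
theorem modularProduct_dist_eq_three {α β : Type*} (G : SimpleGraph α) (H : SimpleGraph β)
    (hG : ¬ IsCompleteGraph G) (hH : ¬ IsCompleteGraph H)
    (hGH : ¬ (TwoCliques G ∧ TwoCliques H)) (g g' : α) (h h' : β) :
    (modularProduct G H).edist (g, h) (g', h') = 3 ↔
      ((closedNbr G g = closedNbr G g' ∧ 3 ≤ H.edist h h' ∧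
        (_root_.IsUniversal G g ∨ gammaPair H h h')) ∨
       (closedNbr H h = closedNbr H h' ∧ 3 ≤ G.edist g g' ∧
        (_root_.IsUniversal H h ∨ gammaPair G g g'))) := by
  constructor
  · intro h3
    have hge : 3 ≤ (modularProduct G H).edist (g, h) (g', h') := le_of_eq h3.symm
    obtain ⟨hne, hnadj, hno⟩ := three_le_edist_iff.mp hge
    have hone : (g' ∈ closedNbr G g ∧ h' ∉ closedNbr H h) ∨
        (g' ∉ closedNbr G g ∧ h' ∈ closedNbr H h) := by
      by_cases hg1 : g' ∈ closedNbr G g <;> by_cases hh1 : h' ∈ closedNbr H h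
      · exfalso
        apply hnadj
        rw [mp_adj_s3]
        left
        refine ⟨?_, hg1, hh1⟩
        by_contra hc
        push_neg at hc
        exact hne (Prod.ext hc.1 hc.2)
      · exact Or.inl ⟨hg1, hh1⟩
      · exact Or.inr ⟨hg1, hh1⟩
      · exfalso
        apply hnadj
        rw [mp_adj_s3]
        exact Or.inr ⟨hg1, hh1⟩
    rcases hone with ⟨hg1, hh1⟩ | ⟨hg1, hh1⟩
    · exact Or.inl (case13_of G H hg1 hh1 hno)
    · refine Or.inr (case13_of H G hh1 hg1 ?_)
      rintro ⟨b, a⟩ ⟨k1, k2⟩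
      exact hno (a, b) ⟨(mp_adj_swap G H g a h b).mpr k1, (mp_adj_swap G H a g' b h').mpr k2⟩
  · intro hC
    rcases hC with ⟨hNg, hd3, hor⟩ | ⟨hNh, hd3, hor⟩
    · obtain ⟨hneH, hnadjH, hnocomH⟩ := three_le_edist_iff.mp hd3
      have hQ : h' ∉ closedNbr H h := by
        rw [mem_closedNbr]
        rintro (e | ha)
        · exact hneH e.symm
        · exact hnadjH ha
      have hQ2 : h ∉ closedNbr H h' := by
        rw [mem_closedNbr]
        rintro (e | ha)
        · exact hneH e
        · exact hnadjH ha.symm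
      have hcap' : ∀ b, b ∈ closedNbr H h → b ∈ closedNbr H h' → False := by
        intro b h1 h2
        rcases (mem_closedNbr _).mp h1 with e | ha
        · subst e; exact hQ2 h2
        · rcases (mem_closedNbr _).mp h2 with e | ha'
          · subst e; exact hQ h1
          · exact hnocomH b ⟨ha, ha'.symm⟩
      have hor' : _root_.IsUniversal G g ∨ closedNbr H h ∪ closedNbr H h' = Set.univ := by
        rcases hor with hu | ⟨-, hcup⟩
        · exact Or.inl hu
        · exact Or.inr hcup
      have hno := no_common_of13 G H hNg hcap' hor'
      have hge : 3 ≤ (modularProduct G H).edist (g, h) (g', h') := by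
        rw [three_le_edist_iff]
        refine ⟨fun e => hneH (congrArg Prod.snd e), ?_, hno⟩
        rw [mp_adj_s3]
        rintro (⟨-, -, hmem⟩ | ⟨hgmem, -⟩)
        · exact hQ hmem
        · exact hgmem (by rw [hNg]; exact self_mem_closedNbr G g')
      obtain ⟨u, v, e1, e2, e3⟩ := exists_mids G H hG hGH hNg hQ hQ2 hor
      exact le_antisymm (edist_le_three u v e1 e2 e3) hge
    · obtain ⟨hneG, hnadjG, hnocomG⟩ := three_le_edist_iff.mp hd3
      have hQ : g' ∉ closedNbr G g := by
        rw [mem_closedNbr]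
        rintro (e | ha)
        · exact hneG e.symm
        · exact hnadjG ha
      have hQ2 : g ∉ closedNbr G g' := by
        rw [mem_closedNbr]
        rintro (e | ha)
        · exact hneG e
        · exact hnadjG ha.symm
      have hcap' : ∀ b, b ∈ closedNbr G g → b ∈ closedNbr G g' → False := by
        intro b h1 h2
        rcases (mem_closedNbr _).mp h1 with e | ha
        · subst e; exact hQ2 h2
        · rcases (mem_closedNbr _).mp h2 with e | ha'
          · subst e; exact hQ h1
          · exact hnocomG b ⟨ha, ha'.symm⟩
      have hor' : _root_.IsUniversal H h ∨ closedNbr G g ∪ closedNbr G g' = Set.univ := by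
        rcases hor with hu | ⟨-, hcup⟩
        · exact Or.inl hu
        · exact Or.inr hcup
      have hno' := no_common_of13 H G hNh hcap' hor'
      have hno : ∀ z, ¬((modularProduct G H).Adj (g, h) z ∧
          (modularProduct G H).Adj z (g', h')) := by
        rintro ⟨a, b⟩ ⟨k1, k2⟩
        exact hno' (b, a) ⟨(mp_adj_swap G H g a h b).mp k1, (mp_adj_swap G H a g' b h').mp k2⟩
      have hge : 3 ≤ (modularProduct G H).edist (g, h) (g', h') := by
        rw [three_le_edist_iff]
        refine ⟨fun e => hneG (congrArg Prod.fst e), ?_, hno⟩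
        rw [mp_adj_s3]
        rintro (⟨-, hgmem, -⟩ | ⟨-, hhmem⟩)
        · exact hQ hgmem
        · exact hhmem (by rw [hNh]; exact self_mem_closedNbr H h')
      have hGH' : ¬ (TwoCliques H ∧ TwoCliques G) := fun ⟨x, y⟩ => hGH ⟨y, x⟩
      obtain ⟨⟨b1, a1⟩, ⟨b2, a2⟩, e1, e2, e3⟩ := exists_mids H G hH hGH' hNh hQ hQ2 hor
      refine le_antisymm (edist_le_three (a1, b1) (a2, b2) ?_ ?_ ?_) hge
      · exact (mp_adj_swap G H g a1 h b1).mpr e1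
      · exact (mp_adj_swap G H a1 a2 b1 b2).mpr e2
      · exact (mp_adj_swap G H a2 g' b2 h').mpr e3
end
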